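/- Let R be a commutative ring, V a type with degree function d : V → ℤ, A the free associative unital R-algebra on V graded so that v ∈ V has degree d(v), with a degree −1 square-zero signed-Leibniz differential ∂, and let S_i(A) be the stabilization, the free algebra on V and two new generators e₁ (degree i), e₂ (degree i−1) with differential ∂′ extending ∂ and ∂′e₁ = e₂, ∂′e₂ = 0. Each monomial w in the generators of S_i(A) either contains no occurrence of e₁, e₂ (so w ∈ A), or factors uniquely as w = a·e_j·b where a ∈ A is a monomial containing no e₁, e₂ and j ∈ {1,2}. Define the R-linear map H : S_i(A) → S_i(A) on monomials by H(w) = 0 if w ∈ A, H(a e₁ b) = 0, and H(a e₂ b) = (−1)^{|a|+1} a e₁ b. Let τ : S_i(A) → A be the algebra projection fixing V and sending e₁, e₂ to 0, and ι : A → S_i(A) the inclusion. Then ι∘τ − Id = H∘∂′ + ∂′∘H on S_i(A); in particular ι∘τ is chain homotopic to the identity. (Equations (3.7)–(3.8) in the proof of Corollary 3.9 of the paper.) -/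

import Mathlib

/-- The degree of a monomial (a word in the generators), given a degree function `d`
on the generators: the sum of the degrees of its letters. -/
def monomialDegree {V : Type*} (d : V → ℤ) (w : FreeMonoid V) : ℤ :=
  (w.toList.map d).sum

/-- The homogeneous component of degree `n` of the free associative unital
`R`-algebra on `V` (realized as the monoid algebra on the free monoid on `V`),
graded so that a generator `v` has degree `d v`. -/
noncomputable def homogComponent (R : Type*) [CommRing R] {V : Type*} (d : V → ℤ) (n : ℤ) :
    Submodule R (MonoidAlgebra R (FreeMonoid V)) :=
  MonoidAlgebra.supported R R {w : FreeMonoid V | monomialDegree d w = n}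

/-- Split a word in the generators `V ⊕ Fin 2` at the first occurrence of one of the
two adjoined generators `e₁ = inr 0`, `e₂ = inr 1`: returns `none` if there is no
such occurrence, and otherwise the (unique) factorization `w = a · e_j · b` with `a`
a word in the old generators only. -/
def splitAtFirstSpecial {V : Type*} :
    List (V ⊕ Fin 2) → Option (List V × Fin 2 × List (V ⊕ Fin 2))
  | [] => none
  | (Sum.inl v) :: rest =>
      (splitAtFirstSpecial rest).map fun p => (v :: p.1, p.2)
  | (Sum.inr j) :: rest => some ([], j, rest)

/-- The value of the chain homotopy `H` on a monomial `w` of the stabilized algebra: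
`H w = 0` if `w` contains no `e₁, e₂`; `H (a e₁ b) = 0`; and
`H (a e₂ b) = (−1)^{|a|+1} a e₁ b`, where `a` contains no `e₁, e₂` and `|a|` is its
degree. -/
noncomputable def homotopyOnMonomial (R : Type*) [CommRing R] {V : Type*} (d : V → ℤ)
    (w : FreeMonoid (V ⊕ Fin 2)) : MonoidAlgebra R (FreeMonoid (V ⊕ Fin 2)) :=
  match splitAtFirstSpecial w.toList with
  | none => 0
  | some (a, j, b) =>
      if j = 1 then
        (Int.negOnePow ((a.map d).sum + 1) : ℤ) •
          MonoidAlgebra.single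
            (FreeMonoid.ofList (a.map (Sum.inl : V → V ⊕ Fin 2)
              ++ (Sum.inr 0 : V ⊕ Fin 2) :: b)) (1 : R)
      else 0

/-- The `R`-linear chain homotopy `H` on the stabilized algebra, extending
`homotopyOnMonomial` linearly from the monomial basis. -/
noncomputable def homotopyH (R : Type*) [CommRing R] {V : Type*} (d : V → ℤ) :
    MonoidAlgebra R (FreeMonoid (V ⊕ Fin 2)) →ₗ[R]
      MonoidAlgebra R (FreeMonoid (V ⊕ Fin 2)) :=
  Finsupp.lift (MonoidAlgebra R (FreeMonoid (V ⊕ Fin 2))) R (FreeMonoid (V ⊕ Fin 2))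
    (homotopyOnMonomial R d) ∘ₗ (MonoidAlgebra.coeffLinearEquiv R).toLinearMap

/-- The natural inclusion `ι : A → S_i(A)` of the free algebra on `V` into the free
algebra on `V ⊕ Fin 2`. -/
noncomputable def inclusionIota (R : Type*) [CommRing R] (V : Type*) :
    MonoidAlgebra R (FreeMonoid V) →ₐ[R] MonoidAlgebra R (FreeMonoid (V ⊕ Fin 2)) :=
  MonoidAlgebra.lift R _ (FreeMonoid V)
    (FreeMonoid.lift fun v =>
      MonoidAlgebra.single (FreeMonoid.of (Sum.inl v : V ⊕ Fin 2)) (1 : R))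

/-- The algebra projection `τ : S_i(A) → A` fixing the generators in `V` and sending
`e₁, e₂` to `0`. -/
noncomputable def projectionTau (R : Type*) [CommRing R] (V : Type*) :
    MonoidAlgebra R (FreeMonoid (V ⊕ Fin 2)) →ₐ[R] MonoidAlgebra R (FreeMonoid V) :=
  MonoidAlgebra.lift R _ (FreeMonoid (V ⊕ Fin 2))
    (FreeMonoid.lift (Sum.elim
      (fun v => MonoidAlgebra.single (FreeMonoid.of v) (1 : R))
      (fun _ => 0)))


section AuxLemmas

variable (R : Type*) [CommRing R] {V : Type*} (d : V → ℤ)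

lemma splitAtFirstSpecial_map_inl_append (a : List V) (l : List (V ⊕ Fin 2)) :
    splitAtFirstSpecial (a.map Sum.inl ++ l)
      = (splitAtFirstSpecial l).map fun p => (a ++ p.1, p.2) := by
  induction a with
  | nil => cases h : splitAtFirstSpecial l <;> simp [h]
  | cons v a ih =>
      cases h : splitAtFirstSpecial l with
      | none => simp [splitAtFirstSpecial, ih, h]
      | some p => simp [splitAtFirstSpecial, ih, h]

lemma homotopyOnMonomial_none {l : List (V ⊕ Fin 2)} (h : splitAtFirstSpecial l = none) :
    homotopyOnMonomial R d (FreeMonoid.ofList l) = 0 := by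
  rw [homotopyOnMonomial]
  rw [show (FreeMonoid.ofList l).toList = l from rfl, h]

lemma homotopyOnMonomial_some {l : List (V ⊕ Fin 2)} {a : List V} {j : Fin 2}
    {b : List (V ⊕ Fin 2)} (h : splitAtFirstSpecial l = some (a, j, b)) :
    homotopyOnMonomial R d (FreeMonoid.ofList l)
      = if j = 1 then
          (Int.negOnePow ((a.map d).sum + 1) : ℤ) •
            MonoidAlgebra.single
              (FreeMonoid.ofList (a.map (Sum.inl : V → V ⊕ Fin 2)
                ++ (Sum.inr 0 : V ⊕ Fin 2) :: b)) (1 : R)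
        else 0 := by
  rw [homotopyOnMonomial]
  rw [show (FreeMonoid.ofList l).toList = l from rfl, h]

lemma homotopyOnMonomial_inl (a : List V) :
    homotopyOnMonomial (R := R) d (FreeMonoid.ofList (a.map Sum.inl)) = 0 := by
  apply homotopyOnMonomial_none
  have := splitAtFirstSpecial_map_inl_append a ([] : List (V ⊕ Fin 2))
  simpa [splitAtFirstSpecial] using this

lemma homotopyOnMonomial_prefix (a : List V) (l : List (V ⊕ Fin 2)) :
    homotopyOnMonomial R d (FreeMonoid.ofList (a.map Sum.inl ++ l))
      = (Int.negOnePow ((a.map d).sum) : ℤ) •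
          (MonoidAlgebra.single (FreeMonoid.ofList (a.map Sum.inl)) (1 : R)
            * homotopyOnMonomial R d (FreeMonoid.ofList l)) := by
  cases h : splitAtFirstSpecial l with
  | none =>
      rw [homotopyOnMonomial_none R d h, homotopyOnMonomial_none R d
        (by rw [splitAtFirstSpecial_map_inl_append, h]; rfl)]
      simp
  | some p =>
      obtain ⟨a', j, b⟩ := p
      rw [homotopyOnMonomial_some R d h, homotopyOnMonomial_some R d
        (show splitAtFirstSpecial (a.map Sum.inl ++ l) = some (a ++ a', j, b) by
          rw [splitAtFirstSpecial_map_inl_append, h]; rfl)]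
      by_cases hj : j = 1
      · simp only [hj, if_true]
        rw [mul_smul_comm, smul_smul, MonoidAlgebra.single_mul_single, one_mul]
        congr 1
        · rw [← Units.val_mul, ← Int.negOnePow_add]
          congr 2
          simp [add_assoc]
        · congr 1
          show FreeMonoid.ofList _ = FreeMonoid.ofList _ * FreeMonoid.ofList _
          rw [← FreeMonoid.ofList_append]
          simp
      · simp [hj]

lemma homotopyH_single (w : FreeMonoid (V ⊕ Fin 2)) (r : R) :
    homotopyH R d (MonoidAlgebra.single w r) = r • homotopyOnMonomial R d w := by
  rw [homotopyH, LinearMap.comp_apply]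
  erw [Finsupp.lift_apply]
  exact Finsupp.sum_single_index (by simp)

lemma prod_single_inl (a : List V) :
    (List.map (fun v => MonoidAlgebra.single
        (FreeMonoid.of (Sum.inl v : V ⊕ Fin 2)) (1:R)) a).prod
      = MonoidAlgebra.single (FreeMonoid.ofList (a.map Sum.inl)) 1 := by
  induction a with
  | nil => simp [MonoidAlgebra.one_def]
  | cons v a ih =>
      simp only [List.map_cons, List.prod_cons, ih, MonoidAlgebra.single_mul_single, one_mul]
      rfl

lemma prod_single_V (a : List V) :
    (List.map (fun v => MonoidAlgebra.single (FreeMonoid.of v) (1:R)) a).prod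
      = MonoidAlgebra.single (FreeMonoid.ofList a) 1 := by
  induction a with
  | nil => simp [MonoidAlgebra.one_def]
  | cons v a ih =>
      simp only [List.map_cons, List.prod_cons, ih, MonoidAlgebra.single_mul_single, one_mul]
      rfl

lemma iota_single (a : List V) (r : R) :
    inclusionIota R V (MonoidAlgebra.single (FreeMonoid.ofList a) r)
      = MonoidAlgebra.single (FreeMonoid.ofList (a.map Sum.inl)) r := by
  rw [inclusionIota, MonoidAlgebra.lift_single, FreeMonoid.lift_apply]
  rw [show (FreeMonoid.ofList a).toList = a from rfl, prod_single_inl]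
  rw [MonoidAlgebra.smul_single', mul_one]

lemma tau_single_inl (a : List V) (r : R) :
    projectionTau R V (MonoidAlgebra.single (FreeMonoid.ofList (a.map Sum.inl)) r)
      = MonoidAlgebra.single (FreeMonoid.ofList a) r := by
  rw [projectionTau, MonoidAlgebra.lift_single, FreeMonoid.lift_apply]
  rw [show (FreeMonoid.ofList (a.map Sum.inl)).toList = a.map Sum.inl from rfl]
  rw [List.map_map, show (Sum.elim
      (fun v => MonoidAlgebra.single (FreeMonoid.of v) (1:R)) (fun _ => 0)) ∘ Sum.inl
      = fun v => MonoidAlgebra.single (FreeMonoid.of v) (1:R) from rfl, prod_single_V]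
  rw [MonoidAlgebra.smul_single', mul_one]

lemma tau_e (j : Fin 2) (r : R) :
    projectionTau R V (MonoidAlgebra.single
      (FreeMonoid.of (Sum.inr j : V ⊕ Fin 2)) r) = 0 := by
  rw [projectionTau, MonoidAlgebra.lift_single, FreeMonoid.lift_eval_of]
  simp

lemma tau_iota (c : MonoidAlgebra R (FreeMonoid V)) :
    projectionTau R V (inclusionIota R V c) = c := by
  induction c using MonoidAlgebra.induction_linear with
  | zero => simp
  | add f g hf hg => rw [map_add, map_add, hf, hg]
  | single w r =>
      rw [show (w : FreeMonoid V) = FreeMonoid.ofList w.toList from rfl,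
        iota_single, tau_single_inl]

lemma H_iota_zero (c : MonoidAlgebra R (FreeMonoid V)) :
    homotopyH R d (inclusionIota R V c) = 0 := by
  induction c using MonoidAlgebra.induction_linear with
  | zero => simp
  | add f g hf hg => rw [map_add, map_add, hf, hg, add_zero]
  | single w r =>
      rw [show (w : FreeMonoid V) = FreeMonoid.ofList w.toList from rfl,
        iota_single, homotopyH_single, homotopyOnMonomial_inl, smul_zero]

lemma H_iota_mul (n : ℤ) (c : MonoidAlgebra R (FreeMonoid V))
    (hc : c ∈ homogComponent R d n) (x : MonoidAlgebra R (FreeMonoid (V ⊕ Fin 2))) :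
    homotopyH R d (inclusionIota R V c * x)
      = (Int.negOnePow n : ℤ) • (inclusionIota R V c * homotopyH R d x) := by
  rw [homogComponent, MonoidAlgebra.supported_eq_span_single] at hc
  induction hc using Submodule.span_induction with
  | zero => simp
  | add y z hy hz ihy ihz =>
      simp only [map_add, add_mul, mul_add, smul_add, ihy, ihz]
  | smul r y hy ih =>
      simp only [map_smul, smul_mul_assoc, map_smul]
      rw [ih, smul_comm]
  | mem c hcmem =>
      obtain ⟨w, hw, rfl⟩ := hcmem
      have hdeg : ((w.toList.map d).sum) = n := hw
      induction x using MonoidAlgebra.induction_linear with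
      | zero => simp
      | add f g hf hg => rw [mul_add, map_add, map_add, mul_add, smul_add, hf, hg]
      | single g r =>
          rw [show (w : FreeMonoid V) = FreeMonoid.ofList w.toList from rfl, iota_single,
            MonoidAlgebra.single_mul_single, one_mul,
            show FreeMonoid.ofList (w.toList.map Sum.inl) * g
              = FreeMonoid.ofList (w.toList.map Sum.inl ++ g.toList) from rfl,
            homotopyH_single, homotopyH_single, homotopyOnMonomial_prefix, hdeg,
            show (g : FreeMonoid (V ⊕ Fin 2)) = FreeMonoid.ofList g.toList from rfl]
          simp only [FreeMonoid.toList_ofList]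
          rw [smul_comm, mul_smul_comm]

lemma H_e1_mul (x : MonoidAlgebra R (FreeMonoid (V ⊕ Fin 2))) :
    homotopyH R d (MonoidAlgebra.single
      (FreeMonoid.of (Sum.inr 0 : V ⊕ Fin 2)) (1:R) * x) = 0 := by
  induction x using MonoidAlgebra.induction_linear with
  | zero => simp
  | add f g hf hg => rw [mul_add, map_add, hf, hg, add_zero]
  | single g r =>
      rw [MonoidAlgebra.single_mul_single, one_mul,
        show FreeMonoid.of (Sum.inr 0 : V ⊕ Fin 2) * g
          = FreeMonoid.ofList ((Sum.inr 0 : V ⊕ Fin 2) :: g.toList) from rfl,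
        homotopyH_single, homotopyOnMonomial_some R d
          (show splitAtFirstSpecial ((Sum.inr 0 : V ⊕ Fin 2) :: g.toList)
            = some ([], 0, g.toList) from rfl)]
      simp

lemma H_e2_mul (x : MonoidAlgebra R (FreeMonoid (V ⊕ Fin 2))) :
    homotopyH R d (MonoidAlgebra.single
      (FreeMonoid.of (Sum.inr 1 : V ⊕ Fin 2)) (1:R) * x)
    = -(MonoidAlgebra.single (FreeMonoid.of (Sum.inr 0 : V ⊕ Fin 2)) (1:R) * x) := by
  induction x using MonoidAlgebra.induction_linear with
  | zero => simp
  | add f g hf hg => rw [mul_add, map_add, hf, hg, mul_add, neg_add]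
  | single g r =>
      rw [MonoidAlgebra.single_mul_single, one_mul,
        show FreeMonoid.of (Sum.inr 1 : V ⊕ Fin 2) * g
          = FreeMonoid.ofList ((Sum.inr 1 : V ⊕ Fin 2) :: g.toList) from rfl,
        homotopyH_single, homotopyOnMonomial_some R d
          (show splitAtFirstSpecial ((Sum.inr 1 : V ⊕ Fin 2) :: g.toList)
            = some ([], 1, g.toList) from rfl)]
      rw [MonoidAlgebra.single_mul_single, one_mul]
      simp only [if_true, List.map_nil, List.sum_nil, zero_add, List.nil_append]
      rw [show (FreeMonoid.of (Sum.inr 0 : V ⊕ Fin 2) * g)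
        = FreeMonoid.ofList ((Sum.inr 0 : V ⊕ Fin 2) :: g.toList) from rfl]
      simp [MonoidAlgebra.smul_single']

end AuxLemmas

/-- **Equations (3.7)–(3.8) in the proof of Corollary 3.9**: for the stabilization
`S_i(A)` of a free DGA `(A, D)` (adjoining `e₁` of degree `i` and `e₂` of degree
`i − 1`, with differential `D'` extending `D`, `D' e₁ = e₂`, `D' e₂ = 0`), the map
`H` defined on monomials by `H(w) = 0` for `w ∈ A`, `H(a e₁ b) = 0` and
`H(a e₂ b) = (−1)^{|a|+1} a e₁ b` satisfies `ι ∘ τ − Id = H ∘ D' + D' ∘ H`;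
in particular `ι ∘ τ` is chain homotopic to the identity. -/
theorem iota_tau_chain_homotopic_id
    (R : Type*) [CommRing R] (V : Type*) (d : V → ℤ) (i : ℤ)
    (d' : V ⊕ Fin 2 → ℤ)
    (hd' : d' = Sum.elim d fun j => if j = 0 then i else i - 1)
    (D : MonoidAlgebra R (FreeMonoid V) →ₗ[R] MonoidAlgebra R (FreeMonoid V))
    (D' : MonoidAlgebra R (FreeMonoid (V ⊕ Fin 2)) →ₗ[R]
      MonoidAlgebra R (FreeMonoid (V ⊕ Fin 2)))
    -- `D` is a degree `−1`, square-zero, signed-Leibniz differential annihilating `R`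
    (hDdeg : ∀ n : ℤ, ∀ a ∈ homogComponent R d n, D a ∈ homogComponent R d (n - 1))
    (hDsq : ∀ a, D (D a) = 0)
    (hDann : ∀ r : R, D (algebraMap R (MonoidAlgebra R (FreeMonoid V)) r) = 0)
    (hDleib : ∀ n : ℤ, ∀ a ∈ homogComponent R d n, ∀ b,
      D (a * b) = D a * b + (Int.negOnePow n : ℤ) • (a * D b))
    -- `D'` is likewise a degree `−1`, square-zero, signed-Leibniz differential
    (hD'deg : ∀ n : ℤ, ∀ a ∈ homogComponent R d' n, D' a ∈ homogComponent R d' (n - 1))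
    (hD'sq : ∀ a, D' (D' a) = 0)
    (hD'ann : ∀ r : R,
      D' (algebraMap R (MonoidAlgebra R (FreeMonoid (V ⊕ Fin 2))) r) = 0)
    (hD'leib : ∀ n : ℤ, ∀ a ∈ homogComponent R d' n, ∀ b,
      D' (a * b) = D' a * b + (Int.negOnePow n : ℤ) • (a * D' b))
    -- `D'` extends `D` and satisfies `D' e₁ = e₂`, `D' e₂ = 0`
    (hext : ∀ a, D' (inclusionIota R V a) = inclusionIota R V (D a))
    (he₁ : D' (MonoidAlgebra.single (FreeMonoid.of (Sum.inr 0 : V ⊕ Fin 2)) (1 : R))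
      = MonoidAlgebra.single (FreeMonoid.of (Sum.inr 1 : V ⊕ Fin 2)) (1 : R))
    (he₂ : D' (MonoidAlgebra.single (FreeMonoid.of (Sum.inr 1 : V ⊕ Fin 2)) (1 : R))
      = 0) :
    ∀ a : MonoidAlgebra R (FreeMonoid (V ⊕ Fin 2)),
      inclusionIota R V (projectionTau R V a) - a
        = homotopyH R d (D' a) + D' (homotopyH R d a) := by
  classical
  have hmemV : ∀ v : V, MonoidAlgebra.single (FreeMonoid.of v) (1:R)
      ∈ homogComponent R d (d v) := fun v => by
    show Finsupp.single _ _ ∈ Finsupp.supported R R _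
    exact Finsupp.single_mem_supported R (1:R)
      (show monomialDegree d (FreeMonoid.of v) = d v by
        simp [monomialDegree, FreeMonoid.toList_of])
  have hmem' : ∀ x : V ⊕ Fin 2, MonoidAlgebra.single (FreeMonoid.of x) (1:R)
      ∈ homogComponent R d' (d' x) := fun x => by
    show Finsupp.single _ _ ∈ Finsupp.supported R R _
    exact Finsupp.single_mem_supported R (1:R)
      (show monomialDegree d' (FreeMonoid.of x) = d' x by
        simp [monomialDegree, FreeMonoid.toList_of])
  have hd'l : ∀ v : V, d' (Sum.inl v) = d v := by simp [hd']
  have hd'e1 : d' (Sum.inr 0) = i := by simp [hd']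
  have hd'e2 : d' (Sum.inr 1) = i - 1 := by simp [hd']
  have hD'one : D' (1 : MonoidAlgebra R (FreeMonoid (V ⊕ Fin 2))) = 0 := by
    have := hD'ann 1; rwa [map_one] at this
  have hneg : ∀ n : ℤ, ((n - 1).negOnePow : ℤ) = -((n.negOnePow : ℤˣ) : ℤ) := by
    intro n
    rw [Int.negOnePow_sub, Int.negOnePow_one]
    simp
  have key : ∀ w : FreeMonoid (V ⊕ Fin 2),
      inclusionIota R V (projectionTau R V (MonoidAlgebra.single w (1:R)))
          - MonoidAlgebra.single w (1:R)
        = homotopyH R d (D' (MonoidAlgebra.single w (1:R)))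
            + D' (homotopyH R d (MonoidAlgebra.single w (1:R))) := by
    intro w
    induction w using FreeMonoid.recOn with
    | one =>
      rw [← MonoidAlgebra.one_def, map_one, map_one]
      have hH1 : homotopyH R d (1 : MonoidAlgebra R (FreeMonoid (V ⊕ Fin 2))) = 0 := by
        have := H_iota_zero R d (1 : MonoidAlgebra R (FreeMonoid V))
        rwa [map_one] at this
      rw [hH1, hD'one, map_zero, map_zero, sub_self, add_zero]
    | of_mul x u ihu =>
      rw [show MonoidAlgebra.single (FreeMonoid.of x * u) (1:R)
          = MonoidAlgebra.single (FreeMonoid.of x) 1 * MonoidAlgebra.single u 1 by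
        rw [MonoidAlgebra.single_mul_single, one_mul]]
      set u1 := MonoidAlgebra.single u (1:R) with hu1
      rcases x with v | j
      · -- case of an old generator `inl v`
        have hgc : inclusionIota R V (MonoidAlgebra.single (FreeMonoid.of v) (1:R))
            = MonoidAlgebra.single (FreeMonoid.of (Sum.inl v : V ⊕ Fin 2)) 1 :=
          iota_single R [v] 1
        rw [← hgc]
        set c := MonoidAlgebra.single (FreeMonoid.of v) (1:R) with hcdef
        have hc : c ∈ homogComponent R d (d v) := hmemV v
        have hc' : D c ∈ homogComponent R d (d v - 1) := hDdeg _ _ hc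
        have hgdeg : inclusionIota R V c ∈ homogComponent R d' (d v) := by
          rw [hgc, ← hd'l v]
          exact hmem' (Sum.inl v)
        rw [map_mul, tau_iota, map_mul]
        rw [hD'leib (d v) _ hgdeg u1, hext]
        rw [map_add (homotopyH R d), map_zsmul (homotopyH R d)]
        rw [H_iota_mul R d (d v - 1) (D c) hc' u1]
        rw [H_iota_mul R d (d v) c hc (D' u1)]
        rw [H_iota_mul R d (d v) c hc u1]
        rw [map_zsmul D', hD'leib (d v) _ hgdeg (homotopyH R d u1), hext]
        rw [hneg (d v)]
        have hIH := sub_eq_iff_eq_add.mp ihu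
        rw [hIH]
        rcases Int.units_eq_one_or ((d v).negOnePow) with h | h <;>
          rw [h] <;>
          simp only [Units.val_one, Units.val_neg, one_smul, neg_smul, one_smul,
            smul_neg, neg_neg, mul_add] <;>
          abel
      · -- case of an adjoined generator `inr j`
        obtain rfl | rfl : j = 0 ∨ j = 1 := by
          rcases j with ⟨jv, hj⟩
          interval_cases jv
          · exact Or.inl rfl
          · exact Or.inr rfl
        · -- `e₁`
          rw [map_mul, tau_e, zero_mul, map_zero, zero_sub]
          have he1deg : MonoidAlgebra.single
              (FreeMonoid.of (Sum.inr 0 : V ⊕ Fin 2)) (1:R)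
              ∈ homogComponent R d' i := hd'e1 ▸ hmem' (Sum.inr 0)
          rw [H_e1_mul R d u1, map_zero, add_zero]
          rw [hD'leib i _ he1deg u1, he₁]
          rw [map_add (homotopyH R d), map_zsmul (homotopyH R d), H_e2_mul,
            H_e1_mul R d (D' u1), smul_zero, add_zero]
        · -- `e₂`
          rw [map_mul, tau_e, zero_mul, map_zero, zero_sub]
          have he1deg : MonoidAlgebra.single
              (FreeMonoid.of (Sum.inr 0 : V ⊕ Fin 2)) (1:R)
              ∈ homogComponent R d' i := hd'e1 ▸ hmem' (Sum.inr 0)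
          have he2deg : MonoidAlgebra.single
              (FreeMonoid.of (Sum.inr 1 : V ⊕ Fin 2)) (1:R)
              ∈ homogComponent R d' (i - 1) := hd'e2 ▸ hmem' (Sum.inr 1)
          rw [H_e2_mul R d u1]
          rw [hD'leib (i - 1) _ he2deg u1, he₂, zero_mul, zero_add]
          rw [map_zsmul (homotopyH R d), H_e2_mul]
          rw [map_neg D', hD'leib i _ he1deg u1, he₁]
          rw [hneg i]
          rcases Int.units_eq_one_or (i.negOnePow) with h | h <;>
            rw [h] <;>
            simp only [Units.val_one, Units.val_neg, one_smul, neg_smul, one_smul,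
              smul_neg, neg_neg, neg_add] <;>
            abel
  intro a
  induction a using MonoidAlgebra.induction_linear with
  | zero => simp
  | add f g hf hg =>
      simp only [map_add]
      rw [add_sub_add_comm, hf, hg]
      abel
  | single w r =>
      show inclusionIota R V (projectionTau R V (MonoidAlgebra.single w r))
          - MonoidAlgebra.single w r
        = homotopyH R d (D' (MonoidAlgebra.single w r))
            + D' (homotopyH R d (MonoidAlgebra.single w r))
      rw [show MonoidAlgebra.single w r = r • MonoidAlgebra.single w (1:R) by
        rw [MonoidAlgebra.smul_single', mul_one]]
      simp only [map_smul]
      rw [← smul_sub, key w, smul_add]
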